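/- (Main convergence theorem.) Let O be a finite set, M ⊆ M_O, pla : M_O → [0,∞) continuous, and suppose the true distribution μ ∈ M satisfies pla(μ) ≠ 0. Then for every ε > 0, the set of observation streams ω ∈ O^ℕ for which there exists K such that for all m ≥ K the conditional belief B(𝓑_ε(μ) | ω^m) holds in (M, pla) has μ̂-probability 1. Here ω^m denotes the initial segment (ω_1,…,ω_m), 𝓑_ε(μ) = {ν ∈ M | d(μ,ν) < ε} is the ε-ball around μ in the Euclidean metric, and B(P | ω^m) holds iff there exists ν ∈ M such that every ξ ∈ M with pla(ξ)·∏_{i=1}^m ξ(ω_i) ≥ pla(ν)·∏_{i=1}^m ν(ω_i) belongs to P. -/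

import Mathlib

open MeasureTheory Filter Topology ProbabilityTheory
open scoped Classical
set_option linter.unusedSectionVars false
set_option maxHeartbeats 1000000

/-- The simplex `M_O` of probability mass functions on a finite set `O`,
identified with `{x ∈ [0,1]^O | ∑ x_i = 1}`. -/
def simplex (O : Type*) [Fintype O] : Set (O → ℝ) :=
  {x | (∀ o, 0 ≤ x o) ∧ ∑ o, x o = 1}

/-- `P` is the i.i.d. infinite product probability measure on `Ω = O^ℕ`
induced by `ν`, characterized by its values on cylinder events. -/
def IsIIDProduct {O : Type*} [Fintype O] [MeasurableSpace O]
    (ν : O → ℝ) (P : Measure (ℕ → O)) : Prop :=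
  IsProbabilityMeasure P ∧
    ∀ (F : Finset ℕ) (s : ℕ → O),
      P {ω | ∀ i ∈ F, ω i = s i} = ∏ i ∈ F, ENNReal.ofReal (ν (s i))

/-- Euclidean distance on the simplex `M_O ⊆ ℝ^O`. -/
noncomputable def euclDist {O : Type*} [Fintype O] (x y : O → ℝ) : ℝ :=
  Real.sqrt (∑ o, (x o - y o) ^ 2)

section Aux
lemma sqrt_add_le' (a b : ℝ) (ha : 0 ≤ a) (hb : 0 ≤ b) :
    Real.sqrt (a + b) ≤ Real.sqrt a + Real.sqrt b := by
  have h1 := Real.sq_sqrt ha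
  have h2 := Real.sq_sqrt hb
  have h3 := Real.sqrt_nonneg a
  have h4 := Real.sqrt_nonneg b
  calc Real.sqrt (a + b) ≤ Real.sqrt ((Real.sqrt a + Real.sqrt b) ^ 2) := by
        apply Real.sqrt_le_sqrt; nlinarith
    _ = Real.sqrt a + Real.sqrt b := Real.sqrt_sq (by positivity)

lemma gibbs {O : Type} [Fintype O] (μ : O → ℝ) (hμ : μ ∈ simplex O)
    (ε : ℝ) (hε : 0 < ε) (η : ℝ) (hη0 : 0 < η)
    (hη : Real.sqrt η ≤ ε ^ 2 / (16 * (Fintype.card O + 1)))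
    (ξ : O → ℝ) (hξ : ξ ∈ simplex O) (hd : ε ≤ euclDist μ ξ) :
    ∑ o, μ o * Real.log (ξ o + η) ≤ ∑ o, μ o * Real.log (μ o) - ε ^ 2 / 8 := by
  obtain ⟨hμ0, hμ1⟩ := hμ
  obtain ⟨hξ0, hξ1⟩ := hξ
  set n := Fintype.card O with hn
  classical
  set s : Finset O := Finset.univ.filter (fun o => 0 < μ o) with hs
  have hoff : ∀ o ∈ Finset.univ, o ∉ s → μ o = 0 := by
    intro o _ ho
    simp only [hs, Finset.mem_filter, Finset.mem_univ, true_and, not_lt] at ho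
    linarith [hμ0 o]
  have hμub : ∀ o, μ o ≤ 1 := by
    intro o
    calc μ o ≤ ∑ o', μ o' := Finset.single_le_sum (fun o' _ => hμ0 o') (Finset.mem_univ o)
      _ = 1 := hμ1
  have hξub : ∀ o, ξ o ≤ 1 := by
    intro o
    calc ξ o ≤ ∑ o', ξ o' := Finset.single_le_sum (fun o' _ => hξ0 o') (Finset.mem_univ o)
      _ = 1 := hξ1
  have hsum_supp : ∑ o ∈ s, μ o = 1 := by
    rw [Finset.sum_subset (Finset.subset_univ s) (by intro o h1 h2; exact hoff o h1 h2)]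
    exact hμ1
  -- reduce sums to the support
  have hL : ∑ o, μ o * Real.log (ξ o + η) = ∑ o ∈ s, μ o * Real.log (ξ o + η) := by
    rw [Finset.sum_subset (Finset.subset_univ s)]
    intro o h1 h2; rw [hoff o h1 h2]; ring
  have hQ : ∑ o, μ o * Real.log (μ o) = ∑ o ∈ s, μ o * Real.log (μ o) := by
    rw [Finset.sum_subset (Finset.subset_univ s)]
    intro o h1 h2; rw [hoff o h1 h2]; ring
  -- key pointwise bound on support
  have key : ∀ o ∈ s, μ o * Real.log (ξ o + η) - μ o * Real.log (μ o) ≤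
      2 * (Real.sqrt (μ o * ξ o) + Real.sqrt η - μ o) := by
    intro o ho
    have hμo : 0 < μ o := by
      simpa only [hs, Finset.mem_filter, Finset.mem_univ, true_and] using ho
    have hb : 0 < ξ o + η := by linarith [hξ0 o]
    have ht : 0 < (ξ o + η) / μ o := div_pos hb hμo
    have hlog : Real.log (ξ o + η) - Real.log (μ o) = Real.log ((ξ o + η) / μ o) :=
      (Real.log_div (ne_of_gt hb) (ne_of_gt hμo)).symm
    have hsq : Real.log ((ξ o + η) / μ o) ≤ 2 * (Real.sqrt ((ξ o + η) / μ o) - 1) := by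
      have h1 : Real.log ((ξ o + η) / μ o) = 2 * Real.log (Real.sqrt ((ξ o + η) / μ o)) := by
        rw [Real.log_sqrt ht.le]; ring
      have h2 : Real.log (Real.sqrt ((ξ o + η) / μ o)) ≤ Real.sqrt ((ξ o + η) / μ o) - 1 :=
        Real.log_le_sub_one_of_pos (Real.sqrt_pos.mpr ht)
      linarith
    have hms : μ o * Real.sqrt ((ξ o + η) / μ o) = Real.sqrt (μ o * (ξ o + η)) := by
      rw [show μ o * (ξ o + η) = μ o ^ 2 * ((ξ o + η) / μ o) by field_simp,
        Real.sqrt_mul (sq_nonneg _), Real.sqrt_sq hμo.le]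
    have hsplit : Real.sqrt (μ o * (ξ o + η)) ≤ Real.sqrt (μ o * ξ o) + Real.sqrt η := by
      have h1 : Real.sqrt (μ o * (ξ o + η)) ≤ Real.sqrt (μ o * ξ o) + Real.sqrt (μ o * η) := by
        rw [mul_add]
        exact sqrt_add_le' _ _ (mul_nonneg hμo.le (hξ0 o)) (mul_nonneg hμo.le hη0.le)
      have h2 : Real.sqrt (μ o * η) ≤ Real.sqrt η := by
        apply Real.sqrt_le_sqrt
        nlinarith [hμub o, hη0]
      linarith
    calc μ o * Real.log (ξ o + η) - μ o * Real.log (μ o)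
        = μ o * Real.log ((ξ o + η) / μ o) := by rw [← hlog]; ring
      _ ≤ μ o * (2 * (Real.sqrt ((ξ o + η) / μ o) - 1)) := by
          apply mul_le_mul_of_nonneg_left hsq hμo.le
      _ = 2 * (μ o * Real.sqrt ((ξ o + η) / μ o) - μ o) := by ring
      _ = 2 * (Real.sqrt (μ o * (ξ o + η)) - μ o) := by rw [hms]
      _ ≤ 2 * (Real.sqrt (μ o * ξ o) + Real.sqrt η - μ o) := by linarith
  -- hellinger identity
  have hell : ∀ o ∈ s, 2 * Real.sqrt (μ o * ξ o) =
      μ o + ξ o - (Real.sqrt (μ o) - Real.sqrt (ξ o)) ^ 2 := by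
    intro o ho
    have h1 : Real.sqrt (μ o * ξ o) = Real.sqrt (μ o) * Real.sqrt (ξ o) :=
      Real.sqrt_mul (hμ0 o) _
    have h2 := Real.sq_sqrt (hμ0 o)
    have h3 := Real.sq_sqrt (hξ0 o)
    nlinarith [h1, h2, h3]
  set W := ∑ o ∈ s, (Real.sqrt (μ o) - Real.sqrt (ξ o)) ^ 2 with hW
  set V := ∑ o ∈ Finset.univ \ s, ξ o with hV
  have hVnn : 0 ≤ V := Finset.sum_nonneg (fun o _ => hξ0 o)
  have hWnn : 0 ≤ W := Finset.sum_nonneg (fun o _ => sq_nonneg _)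
  have hξsplit : ∑ o ∈ s, ξ o = 1 - V := by
    have := Finset.sum_sdiff_eq_sub (f := ξ) (Finset.subset_univ s)
    rw [hξ1] at this
    rw [hV]; linarith [this]
  -- distance lower bound
  have hd2 : ε ^ 2 ≤ ∑ o, (μ o - ξ o) ^ 2 := by
    have h1 : ε ≤ Real.sqrt (∑ o, (μ o - ξ o) ^ 2) := hd
    nlinarith [Real.sq_sqrt (Finset.sum_nonneg (fun o (_ : o ∈ Finset.univ) => sq_nonneg (μ o - ξ o))),
      Real.sqrt_nonneg (∑ o, (μ o - ξ o) ^ 2)]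
  have hdist : ε ^ 2 ≤ 4 * W + V := by
    have hsplit2 : ∑ o, (μ o - ξ o) ^ 2 =
        ∑ o ∈ s, (μ o - ξ o) ^ 2 + ∑ o ∈ Finset.univ \ s, (μ o - ξ o) ^ 2 := by
      rw [Finset.sum_sdiff_eq_sub (Finset.subset_univ s)]; ring
    have h1 : ∑ o ∈ s, (μ o - ξ o) ^ 2 ≤ 4 * W := by
      rw [hW, Finset.mul_sum]
      apply Finset.sum_le_sum
      intro o ho
      have hμo : 0 < μ o := by
        simpa only [hs, Finset.mem_filter, Finset.mem_univ, true_and] using ho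
      have h2 := Real.sq_sqrt (hμ0 o)
      have h3 := Real.sq_sqrt (hξ0 o)
      have h4 : Real.sqrt (μ o) ≤ 1 := by
        rw [show (1:ℝ) = Real.sqrt 1 by simp]; exact Real.sqrt_le_sqrt (hμub o)
      have h5 : Real.sqrt (ξ o) ≤ 1 := by
        rw [show (1:ℝ) = Real.sqrt 1 by simp]; exact Real.sqrt_le_sqrt (hξub o)
      have h6 := Real.sqrt_nonneg (μ o)
      have h7 := Real.sqrt_nonneg (ξ o)
      have h8 : (μ o - ξ o) ^ 2 =
          (Real.sqrt (μ o) - Real.sqrt (ξ o)) ^ 2 * (Real.sqrt (μ o) + Real.sqrt (ξ o)) ^ 2 := by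
        have e : μ o - ξ o = (Real.sqrt (μ o) - Real.sqrt (ξ o)) *
            (Real.sqrt (μ o) + Real.sqrt (ξ o)) := by linear_combination h3 - h2
        rw [e]; ring
      have h9 : (Real.sqrt (μ o) + Real.sqrt (ξ o)) ^ 2 ≤ 4 := by
        have := pow_le_pow_left₀ (add_nonneg h6 h7)
          (show Real.sqrt (μ o) + Real.sqrt (ξ o) ≤ 2 by linarith) 2
        linarith [this]
      have h10 := mul_le_mul_of_nonneg_left h9 (sq_nonneg (Real.sqrt (μ o) - Real.sqrt (ξ o)))
      rw [h8]
      calc (Real.sqrt (μ o) - Real.sqrt (ξ o)) ^ 2 * (Real.sqrt (μ o) + Real.sqrt (ξ o)) ^ 2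
          ≤ (Real.sqrt (μ o) - Real.sqrt (ξ o)) ^ 2 * 4 := h10
        _ = 4 * (Real.sqrt (μ o) - Real.sqrt (ξ o)) ^ 2 := by ring
    have h2 : ∑ o ∈ Finset.univ \ s, (μ o - ξ o) ^ 2 ≤ V := by
      rw [hV]
      apply Finset.sum_le_sum
      intro o ho
      have h3 : μ o = 0 := hoff o (Finset.mem_univ o) (Finset.mem_sdiff.mp ho).2
      rw [h3]
      nlinarith [hξ0 o, hξub o]
    linarith [hd2, hsplit2 ▸ hd2]
  -- cardinality bound
  have hcard : (s.card : ℝ) ≤ n := by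
    exact_mod_cast Nat.cast_le.mpr (le_trans (Finset.card_le_card (Finset.subset_univ s))
      (le_of_eq (Finset.card_univ)))
  have hηbd : 2 * (s.card : ℝ) * Real.sqrt η ≤ ε ^ 2 / 8 := by
    have hnn : (0:ℝ) ≤ Real.sqrt η := Real.sqrt_nonneg η
    have h1 : 2 * (s.card : ℝ) * Real.sqrt η ≤ 2 * (n + 1) * Real.sqrt η := by
      apply mul_le_mul_of_nonneg_right _ hnn
      linarith
    have h2 : 2 * ((n:ℝ) + 1) * Real.sqrt η ≤ 2 * (n + 1) * (ε ^ 2 / (16 * (n + 1))) := by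
      apply mul_le_mul_of_nonneg_left _ (by positivity)
      exact_mod_cast hη
    have h3 : 2 * ((n:ℝ) + 1) * (ε ^ 2 / (16 * (n + 1))) = ε ^ 2 / 8 := by
      field_simp; ring
    linarith
  -- assemble
  have main : ∑ o ∈ s, μ o * Real.log (ξ o + η) - ∑ o ∈ s, μ o * Real.log (μ o) ≤
      -V - W + 2 * s.card * Real.sqrt η := by
    have h1 : ∑ o ∈ s, μ o * Real.log (ξ o + η) - ∑ o ∈ s, μ o * Real.log (μ o) ≤
        ∑ o ∈ s, 2 * (Real.sqrt (μ o * ξ o) + Real.sqrt η - μ o) := by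
      rw [← Finset.sum_sub_distrib]
      exact Finset.sum_le_sum key
    have h2 : ∑ o ∈ s, 2 * (Real.sqrt (μ o * ξ o) + Real.sqrt η - μ o) =
        ∑ o ∈ s, (2 * Real.sqrt (μ o * ξ o)) + 2 * s.card * Real.sqrt η - 2 := by
      have e1 : ∑ o ∈ s, 2 * (Real.sqrt (μ o * ξ o) + Real.sqrt η - μ o)
          = (∑ o ∈ s, 2 * Real.sqrt (μ o * ξ o)) +
            ((∑ _o ∈ s, (2:ℝ) * Real.sqrt η) - ∑ o ∈ s, 2 * μ o) := by
        rw [← Finset.sum_sub_distrib, ← Finset.sum_add_distrib]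
        exact Finset.sum_congr rfl fun o _ => by ring
      have e2 : ∑ o ∈ s, 2 * μ o = 2 := by rw [← Finset.mul_sum, hsum_supp]; norm_num
      rw [e1, Finset.sum_const, nsmul_eq_mul, e2, ← Finset.mul_sum]
      ring
    have h3 : ∑ o ∈ s, (2 * Real.sqrt (μ o * ξ o)) = 1 + (1 - V) - W := by
      rw [Finset.sum_congr rfl hell, Finset.sum_sub_distrib, Finset.sum_add_distrib,
        hsum_supp, hξsplit, hW]
    linarith
  rw [hL, hQ]
  linarith [main, hdist, hηbd]

lemma det_conv {O : Type} [Fintype O]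
    (M : Set (O → ℝ)) (hM : M ⊆ simplex O)
    (pla : (O → ℝ) → ℝ)
    (hpla_cont : ContinuousOn pla (simplex O))
    (hpla_nonneg : ∀ ν ∈ simplex O, 0 ≤ pla ν)
    (μ : O → ℝ) (hμM : μ ∈ M) (hpla : pla μ ≠ 0)
    (ε : ℝ) (hε : 0 < ε) (ω : ℕ → O)
    (hfreq : ∀ o : O, Tendsto
      (fun m : ℕ => (∑ i ∈ Finset.range m, if ω i = o then (1:ℝ) else 0) / m)
      atTop (𝓝 (μ o)))
    (hsupp : ∀ i, 0 < μ (ω i)) :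
    ∃ K, ∀ m ≥ K, ∃ ν ∈ M, ∀ ξ ∈ M,
      pla ν * ∏ i ∈ Finset.range m, ν (ω i) ≤ pla ξ * ∏ i ∈ Finset.range m, ξ (ω i) →
      euclDist μ ξ < ε := by
  classical
  have hμs : μ ∈ simplex O := hM hμM
  have hplaμ : 0 < pla μ := lt_of_le_of_ne (hpla_nonneg μ hμs) (Ne.symm hpla)
  set ε' := min ε 1 with hε'def
  have hε'0 : 0 < ε' := lt_min hε one_pos
  have hε'1 : ε' ≤ 1 := min_le_right _ _
  have hε'ε : ε' ≤ ε := min_le_left _ _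
  set n := Fintype.card O with hn
  set t := ε' ^ 2 / (16 * ((n : ℝ) + 1)) with ht
  have ht0 : 0 < t := by positivity
  have ht1 : t ≤ 1 := by
    rw [ht]
    rw [div_le_one (by positivity)]
    nlinarith [hε'0.le, hε'1, Nat.cast_nonneg (α := ℝ) n]
  set η := t ^ 2 with hη
  have hη0 : 0 < η := by positivity
  have hη1 : η ≤ 1 := by nlinarith
  have hηsqrt : Real.sqrt η = t := Real.sqrt_sq ht0.le
  -- max of pla on the simplex
  have hcomp : IsCompact (simplex O) := isCompact_stdSimplex ℝ O
  obtain ⟨x₀, hx₀, hC⟩ := hcomp.exists_isMaxOn ⟨μ, hμs⟩ hpla_cont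
  set C := pla x₀ with hCdef
  have hC0 : 0 < C := lt_of_lt_of_le hplaμ (hC hμs)
  set q := ∑ o, μ o * Real.log (μ o) with hq
  set δ := ε' ^ 2 / 8 with hδ
  have hδ0 : 0 < δ := by positivity
  set Λ := Real.log 2 - Real.log η with hΛ
  have hlogη : Real.log η ≤ 0 := Real.log_nonpos hη0.le hη1
  have hlog2 : 0 ≤ Real.log 2 := Real.log_nonneg one_le_two
  have hΛ0 : 0 ≤ Λ := by rw [hΛ]; linarith
  set Λ' := ∑ o, |Real.log (μ o)| with hΛ'
  have hΛ'0 : 0 ≤ Λ' := Finset.sum_nonneg fun o _ => abs_nonneg _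
  set θ := δ / (2 * ((n : ℝ) * Λ + Λ' + 1)) with hθ
  have hden : 0 < (n : ℝ) * Λ + Λ' + 1 := by positivity
  have hθ0 : 0 < θ := by positivity
  -- eventually all empirical frequencies are θ-close
  have hev : ∀ᶠ m : ℕ in atTop, ∀ o : O,
      |(∑ i ∈ Finset.range m, if ω i = o then (1:ℝ) else 0) / m - μ o| ≤ θ := by
    rw [eventually_all]
    intro o
    have h1 := (hfreq o).eventually (Metric.ball_mem_nhds (μ o) hθ0)
    filter_upwards [h1] with m hm
    rw [Real.dist_eq] at hm
    exact hm.le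
  obtain ⟨K₀, hK₀⟩ := eventually_atTop.mp hev
  obtain ⟨K₁, hK₁⟩ := exists_nat_gt ((2 / δ) * Real.log (C / pla μ))
  refine ⟨max (max K₀ 1) K₁, fun m hm => ⟨μ, hμM, fun ξ hξM hle => ?_⟩⟩
  by_contra hcon
  push_neg at hcon
  have hd' : ε' ≤ euclDist μ ξ := le_trans hε'ε hcon
  have hξs : ξ ∈ simplex O := hM hξM
  have hm1 : 1 ≤ m := le_trans (le_trans (le_max_right _ _) (le_max_left _ _)) hm
  have hmK₀ : K₀ ≤ m := le_trans (le_trans (le_max_left _ _) (le_max_left _ _)) hm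
  have hmK₁ : K₁ ≤ m := le_trans (le_max_right _ _) hm
  have hmR : (0:ℝ) < m := by exact_mod_cast hm1
  set S : O → ℝ := fun o => ∑ i ∈ Finset.range m, if ω i = o then (1:ℝ) else 0 with hSdef
  set a : O → ℝ := fun o => S o / m with ha
  have habs : ∀ o, |a o - μ o| ≤ θ := hK₀ m hmK₀
  have hSa : ∀ o, S o = m * a o := fun o => by rw [ha]; field_simp
  -- fiber decomposition of sums over observations
  have fiber : ∀ F : O → ℝ, ∑ i ∈ Finset.range m, F (ω i) = ∑ o, S o * F o := by
    intro F
    have e1 : ∀ i ∈ Finset.range m,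
        F (ω i) = ∑ o, (if ω i = o then (1:ℝ) else 0) * F o := by
      intro i _
      symm
      rw [Finset.sum_eq_single (ω i)]
      · simp
      · intro b _ hb; simp [Ne.symm hb]
      · intro h; exact absurd (Finset.mem_univ _) h
    rw [Finset.sum_congr rfl e1, Finset.sum_comm]
    refine Finset.sum_congr rfl fun o _ => ?_
    rw [hSdef, ← Finset.sum_mul]
  -- log-likelihood quantities
  set A := ∑ i ∈ Finset.range m, Real.log (ξ (ω i) + η) with hA
  set B := ∑ i ∈ Finset.range m, Real.log (μ (ω i)) with hB
  have hAeq : A = (m : ℝ) * ∑ o, a o * Real.log (ξ o + η) := by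
    rw [hA, fiber (fun o => Real.log (ξ o + η)), Finset.mul_sum]
    exact Finset.sum_congr rfl fun o _ => by rw [hSa o]; ring
  have hBeq : B = (m : ℝ) * ∑ o, a o * Real.log (μ o) := by
    rw [hB, fiber (fun o => Real.log (μ o)), Finset.mul_sum]
    exact Finset.sum_congr rfl fun o _ => by rw [hSa o]; ring
  -- product identities/bounds
  have hprodμ : ∏ i ∈ Finset.range m, μ (ω i) = Real.exp B := by
    rw [hB, Real.exp_sum]
    exact Finset.prod_congr rfl fun i _ => (Real.exp_log (hsupp i)).symm
  have hprodξ : ∏ i ∈ Finset.range m, ξ (ω i) ≤ Real.exp A := by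
    have h1 : ∏ i ∈ Finset.range m, ξ (ω i) ≤ ∏ i ∈ Finset.range m, (ξ (ω i) + η) := by
      apply Finset.prod_le_prod (fun i _ => hξs.1 (ω i)) (fun i _ => by linarith [hη0])
    have h2 : ∏ i ∈ Finset.range m, (ξ (ω i) + η) = Real.exp A := by
      rw [hA, Real.exp_sum]
      exact Finset.prod_congr rfl fun i _ =>
        (Real.exp_log (by linarith [hξs.1 (ω i), hη0])).symm
    linarith
  -- bounds on the logs
  have hLb : ∀ o, |Real.log (ξ o + η)| ≤ Λ := by
    intro o
    have h0 : 0 ≤ ξ o := hξs.1 o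
    have h1 : ξ o ≤ 1 := by
      calc ξ o ≤ ∑ o', ξ o' := Finset.single_le_sum (fun o' _ => hξs.1 o') (Finset.mem_univ o)
        _ = 1 := hξs.2
    have h2 : Real.log η ≤ Real.log (ξ o + η) := Real.log_le_log hη0 (by linarith)
    have h3 : Real.log (ξ o + η) ≤ Real.log 2 := by
      apply Real.log_le_log (by linarith) (by linarith)
    rw [abs_le, hΛ]
    constructor <;> linarith
  -- the two sum estimates
  have hgibbs : ∑ o, μ o * Real.log (ξ o + η) ≤ q - δ := by
    have := gibbs μ hμs ε' hε'0 η hη0 (by rw [hηsqrt, ht, hn]) ξ hξs hd'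
    rw [hq, hδ]
    exact this
  have hE1 : ∑ o, a o * Real.log (ξ o + η) ≤ q - δ + θ * ((n : ℝ) * Λ) := by
    have h1 : ∑ o, a o * Real.log (ξ o + η) =
        ∑ o, μ o * Real.log (ξ o + η) + ∑ o, (a o - μ o) * Real.log (ξ o + η) := by
      rw [← Finset.sum_add_distrib]
      exact Finset.sum_congr rfl fun o _ => by ring
    have h2 : ∑ o, (a o - μ o) * Real.log (ξ o + η) ≤ θ * ((n : ℝ) * Λ) := by
      calc ∑ o, (a o - μ o) * Real.log (ξ o + η)
          ≤ ∑ o : O, θ * Λ := by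
            apply Finset.sum_le_sum
            intro o _
            calc (a o - μ o) * Real.log (ξ o + η) ≤ |(a o - μ o) * Real.log (ξ o + η)| :=
                  le_abs_self _
              _ = |a o - μ o| * |Real.log (ξ o + η)| := abs_mul _ _
              _ ≤ θ * Λ := mul_le_mul (habs o) (hLb o) (abs_nonneg _) hθ0.le
        _ = θ * ((n : ℝ) * Λ) := by
            rw [Finset.sum_const, nsmul_eq_mul, hn, Finset.card_univ]; ring
    linarith
  have hE2 : q - θ * Λ' ≤ ∑ o, a o * Real.log (μ o) := by
    have h1 : ∑ o, a o * Real.log (μ o) =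
        q + ∑ o, (a o - μ o) * Real.log (μ o) := by
      rw [hq, ← Finset.sum_add_distrib]
      exact Finset.sum_congr rfl fun o _ => by ring
    have h2 : -(θ * Λ') ≤ ∑ o, (a o - μ o) * Real.log (μ o) := by
      have h3 : ∑ o, (a o - μ o) * Real.log (μ o) ≥ ∑ o, -(θ * |Real.log (μ o)|) := by
        apply Finset.sum_le_sum
        intro o _
        have h4 : |(a o - μ o) * Real.log (μ o)| ≤ θ * |Real.log (μ o)| := by
          rw [abs_mul]
          exact mul_le_mul_of_nonneg_right (habs o) (abs_nonneg _)
        have h5 := neg_abs_le ((a o - μ o) * Real.log (μ o))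
        linarith
      have h6 : ∑ o, -(θ * |Real.log (μ o)|) = -(θ * Λ') := by
        rw [hΛ', Finset.mul_sum, ← Finset.sum_neg_distrib]
      linarith
    linarith
  -- combine
  have hθbd : θ * ((n : ℝ) * Λ + Λ') ≤ δ / 2 := by
    have hfrac : ((n:ℝ) * Λ + Λ') / ((n:ℝ) * Λ + Λ' + 1) ≤ 1 := by
      rw [div_le_one hden]; linarith
    have e : θ * ((n:ℝ) * Λ + Λ') = δ / 2 * (((n:ℝ) * Λ + Λ') / ((n:ℝ) * Λ + Λ' + 1)) := by
      rw [hθ]; field_simp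
    rw [e]
    calc δ / 2 * (((n:ℝ) * Λ + Λ') / ((n:ℝ) * Λ + Λ' + 1)) ≤ δ / 2 * 1 :=
          mul_le_mul_of_nonneg_left hfrac (by positivity)
      _ = δ / 2 := mul_one _
  have hAB : A - B ≤ -((m : ℝ) * (δ / 2)) := by
    have h1 : A - B ≤ (m : ℝ) * (-δ + θ * ((n : ℝ) * Λ + Λ')) := by
      rw [hAeq, hBeq, ← mul_sub]
      apply mul_le_mul_of_nonneg_left _ hmR.le
      have hdist2 : θ * ((n : ℝ) * Λ + Λ') = θ * ((n : ℝ) * Λ) + θ * Λ' := by ring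
      linarith [hE1, hE2, hdist2]
    have h2 : -δ + θ * ((n : ℝ) * Λ + Λ') ≤ -(δ/2) := by linarith
    calc A - B ≤ (m : ℝ) * (-δ + θ * ((n : ℝ) * Λ + Λ')) := h1
      _ ≤ (m : ℝ) * (-(δ/2)) := mul_le_mul_of_nonneg_left h2 hmR.le
      _ = -((m : ℝ) * (δ / 2)) := by ring
  have hlogCμ : Real.log (C / pla μ) < (m : ℝ) * (δ / 2) := by
    have h1 : ((K₁ : ℝ)) ≤ m := by exact_mod_cast hmK₁
    have h2 : (2 / δ) * Real.log (C / pla μ) < (m : ℝ) := lt_of_lt_of_le hK₁ h1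
    rw [show (m : ℝ) * (δ / 2) = ((m : ℝ) * δ) / 2 by ring]
    rw [lt_div_iff₀ (by norm_num : (0:ℝ) < 2)]
    calc Real.log (C / pla μ) * 2 = δ * ((2 / δ) * Real.log (C / pla μ)) := by
          field_simp
      _ < δ * m := by exact mul_lt_mul_of_pos_left h2 hδ0
      _ = (m : ℝ) * δ := by ring
  have hABfin : A < B + Real.log (pla μ / C) := by
    have h1 : Real.log (pla μ / C) = -Real.log (C / pla μ) := by
      rw [← Real.log_inv]
      congr 1
      field_simp
    linarith [hAB, hlogCμ, h1 ▸ le_refl (Real.log (pla μ / C))]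
  -- final chain
  have hfinal : pla ξ * ∏ i ∈ Finset.range m, ξ (ω i) <
      pla μ * ∏ i ∈ Finset.range m, μ (ω i) := by
    have hprodnn : 0 ≤ ∏ i ∈ Finset.range m, ξ (ω i) :=
      Finset.prod_nonneg fun i _ => hξs.1 (ω i)
    have step1 : pla ξ * ∏ i ∈ Finset.range m, ξ (ω i) ≤
        C * ∏ i ∈ Finset.range m, ξ (ω i) :=
      mul_le_mul_of_nonneg_right (hC hξs) hprodnn
    have step2 : C * ∏ i ∈ Finset.range m, ξ (ω i) ≤ C * Real.exp A :=
      mul_le_mul_of_nonneg_left hprodξ hC0.le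
    have step3 : C * Real.exp A < C * Real.exp (B + Real.log (pla μ / C)) :=
      mul_lt_mul_of_pos_left (Real.exp_lt_exp.mpr hABfin) hC0
    have step4 : C * Real.exp (B + Real.log (pla μ / C)) =
        pla μ * ∏ i ∈ Finset.range m, μ (ω i) := by
      rw [Real.exp_add, Real.exp_log (by positivity), hprodμ]
      field_simp
    linarith
  linarith [hle, hfinal]

section Prob

variable {O : Type} [Fintype O] [MeasurableSpace O] [DiscreteMeasurableSpace O]
  (μ : O → ℝ) (P : Measure (ℕ → O))

lemma single_cyl (hP : IsIIDProduct μ P) (i : ℕ) (o : O) : P {ω | ω i = o} = ENNReal.ofReal (μ o) := by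
  have h := hP.2 {i} (fun _ => o)
  simpa using h

lemma pair_cyl (hP : IsIIDProduct μ P) {i j : ℕ} (hij : i ≠ j) (a b : O) :
    P {ω | ω i = a ∧ ω j = b} = ENNReal.ofReal (μ a) * ENNReal.ofReal (μ b) := by
  have h := hP.2 {i, j} (fun k => if k = i then a else b)
  have hset : {ω : ℕ → O | ∀ k ∈ ({i, j} : Finset ℕ), ω k = (fun k => if k = i then a else b) k}
      = {ω | ω i = a ∧ ω j = b} := by
    ext ω
    simp only [Set.mem_setOf_eq, Finset.mem_insert, Finset.mem_singleton]
    constructor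
    · intro hforall
      refine ⟨?_, ?_⟩
      · have := hforall i (Or.inl rfl); simpa using this
      · have := hforall j (Or.inr rfl); simpa [hij.symm] using this
    · rintro ⟨h1, h2⟩ k hk
      rcases hk with rfl | rfl
      · simpa using h1
      · simpa [hij.symm] using h2
  have hprod : ∏ k ∈ ({i, j} : Finset ℕ), ENNReal.ofReal (μ (if k = i then a else b))
      = ENNReal.ofReal (μ a) * ENNReal.ofReal (μ b) := by
    rw [Finset.prod_pair hij]
    simp [hij.symm]
  rw [hset, hprod] at h
  exact h

lemma eval_meas_set (i : ℕ) (s : Set O) : MeasurableSet ((fun ω : ℕ → O => ω i) ⁻¹' s) :=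
  (measurable_pi_apply i) (MeasurableSet.of_discrete (s := s))

lemma pre_single (hP : IsIIDProduct μ P) (i : ℕ) (s : Set O) :
    P ((fun ω : ℕ → O => ω i) ⁻¹' s) =
      ∑ o ∈ Finset.univ.filter (· ∈ s), ENNReal.ofReal (μ o) := by
  have hset : (fun ω : ℕ → O => ω i) ⁻¹' s =
      ⋃ o ∈ Finset.univ.filter (· ∈ s), {ω : ℕ → O | ω i = o} := by
    ext ω
    simp
  rw [hset, measure_biUnion_finset]
  · exact Finset.sum_congr rfl fun o _ => single_cyl μ P hP i o
  · intro a _ b _ hab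
    apply Set.disjoint_left.mpr
    rintro ω (h1 : ω i = a) (h2 : ω i = b)
    exact hab (h1 ▸ h2 ▸ rfl)
  · intro o _
    exact eval_meas_set i {o}

lemma coord_indep (hP : IsIIDProduct μ P) {i j : ℕ} (hij : i ≠ j) :
    IndepFun (fun ω : ℕ → O => ω i) (fun ω : ℕ → O => ω j) P := by
  rw [indepFun_iff_measure_inter_preimage_eq_mul]
  intro s t _ _
  have hset : (fun ω : ℕ → O => ω i) ⁻¹' s ∩ (fun ω : ℕ → O => ω j) ⁻¹' t
      = ⋃ p ∈ (Finset.univ.filter (· ∈ s)) ×ˢ (Finset.univ.filter (· ∈ t)),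
          {ω : ℕ → O | ω i = p.1 ∧ ω j = p.2} := by
    ext ω
    simp [Finset.mem_product]
  rw [hset, measure_biUnion_finset, pre_single μ P hP, pre_single μ P hP]
  · rw [Finset.sum_mul_sum]
    rw [Finset.sum_product]
    exact Finset.sum_congr rfl fun a _ => Finset.sum_congr rfl fun b _ =>
      pair_cyl μ P hP hij a b
  · rintro ⟨a, b⟩ _ ⟨a', b'⟩ _ hne
    apply Set.disjoint_left.mpr
    rintro ω ⟨h1, h2⟩ ⟨h3, h4⟩
    exact hne (by simp_all)
  · rintro ⟨a, b⟩ _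
    have : {ω : ℕ → O | ω i = a ∧ ω j = b}
        = (fun ω : ℕ → O => ω i) ⁻¹' {a} ∩ (fun ω : ℕ → O => ω j) ⁻¹' {b} := by
      ext ω; simp
    rw [this]
    exact (eval_meas_set i {a}).inter (eval_meas_set j {b})

end Prob

section Main

variable {O : Type} [Fintype O] [MeasurableSpace O] [DiscreteMeasurableSpace O]
  (μ : O → ℝ) (P : Measure (ℕ → O))

lemma slln (hP : IsIIDProduct μ P) (hμnn : ∀ o, 0 ≤ μ o) (o : O) :
    ∀ᵐ ω ∂P, Tendsto
      (fun m : ℕ => (∑ i ∈ Finset.range m, if ω i = o then (1:ℝ) else 0) / m)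
      atTop (𝓝 (μ o)) := by
  haveI : IsProbabilityMeasure P := hP.1
  set φ : O → ℝ := fun a => if a = o then 1 else 0 with hφ
  have hφm : Measurable φ := Measurable.of_discrete
  set X : ℕ → (ℕ → O) → ℝ := fun i ω => if ω i = o then 1 else 0 with hX
  have hXeq : ∀ i, X i = φ ∘ (fun ω : ℕ → O => ω i) := fun i => rfl
  have hXind : X 0 = Set.indicator {ω : ℕ → O | ω 0 = o} (fun _ => (1:ℝ)) := by
    funext ω
    by_cases h : ω 0 = o <;> simp [hX, Set.indicator, h]
  have hmeas0 : MeasurableSet {ω : ℕ → O | ω 0 = o} := eval_meas_set 0 {o}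
  have hint : Integrable (X 0) P := by
    rw [hXind]
    exact (integrable_const (1:ℝ)).indicator hmeas0
  have hindep : Pairwise (Function.onFun (IndepFun · · P) X) := by
    intro i j hij
    have h := coord_indep μ P hP hij
    exact h.comp hφm hφm
  have hident : ∀ i, IdentDistrib (X i) (X 0) P P := by
    intro i
    have hev : IdentDistrib (fun ω : ℕ → O => ω i) (fun ω : ℕ → O => ω 0) P P := by
      refine ⟨(measurable_pi_apply i).aemeasurable, (measurable_pi_apply 0).aemeasurable, ?_⟩
      ext s hs
      rw [Measure.map_apply (measurable_pi_apply i) hs,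
        Measure.map_apply (measurable_pi_apply 0) hs,
        pre_single μ P hP, pre_single μ P hP]
    exact hev.comp hφm
  have hmean : P[X 0] = μ o := by
    rw [hXind, integral_indicator_const _ hmeas0, measureReal_def, single_cyl μ P hP 0 o]
    simp [ENNReal.toReal_ofReal (hμnn o)]
  have h := ProbabilityTheory.strong_law_ae_real X hint hindep hident
  rw [hmean] at h
  exact h

lemma supp_ae (hP : IsIIDProduct μ P) (hμnn : ∀ o, 0 ≤ μ o) :
    ∀ᵐ ω ∂P, ∀ i, 0 < μ (ω i) := by
  rw [ae_all_iff]
  intro i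
  rw [ae_iff]
  have hset : {ω : ℕ → O | ¬ 0 < μ (ω i)} = (fun ω : ℕ → O => ω i) ⁻¹' {a | ¬ 0 < μ a} := rfl
  rw [hset, pre_single μ P hP]
  apply Finset.sum_eq_zero
  intro o ho
  have ho2 : ¬ 0 < μ o := by simpa using ho
  have : μ o = 0 := le_antisymm (not_lt.mp ho2) (hμnn o)
  simp [this]

end Main
end Aux

/-- Main convergence theorem: if the true distribution `μ ∈ M ⊆ M_O` has nonzero
plausibility, then with `μ̂`-probability 1 there is a stage `K` after which, for all
`m ≥ K`, the conditional belief `B(𝓑_ε(μ) | ω^m)` holds in `(M, pla)`: there is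
`ν ∈ M` such that every `ξ ∈ M` with `pla_{ω^m}(ξ) ≥ pla_{ω^m}(ν)` satisfies
`d(μ, ξ) < ε`, where `pla_w(ξ) = pla(ξ)·∏_{i<m} ξ(w_i)`. -/
theorem belief_converges_to_true_distribution
    {O : Type} [Fintype O] [MeasurableSpace O] [DiscreteMeasurableSpace O]
    (M : Set (O → ℝ)) (hM : M ⊆ simplex O)
    (pla : (O → ℝ) → ℝ)
    (hpla_cont : ContinuousOn pla (simplex O))
    (hpla_nonneg : ∀ ν ∈ simplex O, 0 ≤ pla ν)
    (μ : O → ℝ) (hμM : μ ∈ M) (hpla : pla μ ≠ 0)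
    (P : Measure (ℕ → O)) (hP : IsIIDProduct μ P)
    (ε : ℝ) (hε : 0 < ε) :
    P {ω | ∃ K, ∀ m ≥ K, ∃ ν ∈ M, ∀ ξ ∈ M,
        pla ν * ∏ i ∈ Finset.range m, ν (ω i) ≤
          pla ξ * ∏ i ∈ Finset.range m, ξ (ω i) →
        euclDist μ ξ < ε} = 1 := by
  haveI : IsProbabilityMeasure P := hP.1
  have hμs : μ ∈ simplex O := hM hμM
  have hμnn : ∀ o, 0 ≤ μ o := hμs.1
  set S := {ω : ℕ → O | ∃ K, ∀ m ≥ K, ∃ ν ∈ M, ∀ ξ ∈ M,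
      pla ν * ∏ i ∈ Finset.range m, ν (ω i) ≤
        pla ξ * ∏ i ∈ Finset.range m, ξ (ω i) →
      euclDist μ ξ < ε} with hSdef
  -- measurability
  have hQm : ∀ m : ℕ, MeasurableSet {ω : ℕ → O | ∃ ν ∈ M, ∀ ξ ∈ M,
      pla ν * ∏ i ∈ Finset.range m, ν (ω i) ≤
        pla ξ * ∏ i ∈ Finset.range m, ξ (ω i) →
      euclDist μ ξ < ε} := by
    intro m
    haveI : MeasurableSingletonClass (Fin m → O) := by
      constructor
      intro f
      have : {f} = ⋂ i, (fun g : Fin m → O => g i) ⁻¹' {f i} := by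
        ext g; simp [funext_iff]
      rw [this]
      exact MeasurableSet.iInter fun i =>
        (measurable_pi_apply i) (MeasurableSet.of_discrete (s := {f i}))
    set T := {v : Fin m → O | ∃ ν ∈ M, ∀ ξ ∈ M,
        pla ν * ∏ i : Fin m, ν (v i) ≤ pla ξ * ∏ i : Fin m, ξ (v i) →
        euclDist μ ξ < ε} with hT
    have hTm : MeasurableSet T := (Set.toFinite T).measurableSet
    have hmap : Measurable (fun ω : ℕ → O => (fun i : Fin m => ω i)) :=
      measurable_pi_lambda _ fun i => measurable_pi_apply _
    have hseteq : {ω : ℕ → O | ∃ ν ∈ M, ∀ ξ ∈ M,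
        pla ν * ∏ i ∈ Finset.range m, ν (ω i) ≤
          pla ξ * ∏ i ∈ Finset.range m, ξ (ω i) →
        euclDist μ ξ < ε} = (fun ω : ℕ → O => (fun i : Fin m => ω i)) ⁻¹' T := by
      ext ω
      have hprod : ∀ g : O → ℝ,
          ∏ i ∈ Finset.range m, g (ω i) = ∏ i : Fin m, g (ω i) := fun g =>
        Finset.prod_range fun i => g (ω i)
      simp only [Set.mem_setOf_eq, Set.mem_preimage, hT, hprod]
    rw [hseteq]
    exact hmap hTm
  have hSm : MeasurableSet S := by
    have : S = ⋃ K : ℕ, ⋂ m : ℕ, ⋂ _ : K ≤ m, {ω : ℕ → O | ∃ ν ∈ M, ∀ ξ ∈ M,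
        pla ν * ∏ i ∈ Finset.range m, ν (ω i) ≤
          pla ξ * ∏ i ∈ Finset.range m, ξ (ω i) →
        euclDist μ ξ < ε} := by
      ext ω
      simp only [hSdef, Set.mem_setOf_eq, Set.mem_iUnion, Set.mem_iInter]
    rw [this]
    exact MeasurableSet.iUnion fun K => MeasurableSet.iInter fun m =>
      MeasurableSet.iInter fun _ => hQm m
  -- a.s. membership
  have hae : ∀ᵐ ω ∂P, ω ∈ S := by
    have h1 : ∀ᵐ ω ∂P, ∀ o : O, Tendsto
        (fun m : ℕ => (∑ i ∈ Finset.range m, if ω i = o then (1:ℝ) else 0) / m)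
        atTop (𝓝 (μ o)) := ae_all_iff.mpr fun o => slln μ P hP hμnn o
    have h2 : ∀ᵐ ω ∂P, ∀ i, 0 < μ (ω i) := supp_ae μ P hP hμnn
    filter_upwards [h1, h2] with ω hω1 hω2
    exact det_conv M hM pla hpla_cont hpla_nonneg μ hμM hpla ε hε ω hω1 hω2
  -- conclude
  have h0 : P Sᶜ = 0 := by
    have := ae_iff.mp hae
    simpa [Set.compl_def] using this
  have := measure_add_measure_compl hSm (μ := P)
  rw [h0, add_zero, measure_univ] at this
  exact this
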